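/- Let G be a finite simple graph with n vertices. Then Σ_{S ∈ D(G)} |a(S)| = 2·Σ_{S ∈ D(G)} |S| − n·|D(G)| (equivalently, Σ_{S ∈ D(G)} |a(S)| = 2D'(G,1) − nD(G,1), where D(G,x) is the domination polynomial of G). -/
import Mathlib


open Finset

/-- `S` is a dominating set of `G`: every vertex is in `S` or adjacent to a vertex of `S`. -/
def SimpleGraph.IsDomSet {V : Type*} (G : SimpleGraph V) (S : Finset V) : Prop :=
  ∀ v : V, v ∈ S ∨ ∃ u ∈ S, G.Adj u v

/-- The family of all dominating sets of `G`. -/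
noncomputable def SimpleGraph.domSets {V : Type*} [Fintype V] (G : SimpleGraph V) :
    Finset (Finset V) :=
  @Finset.filter _ (fun S => G.IsDomSet S) (Classical.decPred _) Finset.univ

/-- The average order (cardinality) of a dominating set of `G`. -/
noncomputable def SimpleGraph.avd {V : Type*} [Fintype V] (G : SimpleGraph V) : ℝ :=
  (∑ S ∈ G.domSets, (S.card : ℝ)) / (G.domSets).card
/-- The set of critical vertices of a dominating set `S`: those `v ∈ S` whose removal
makes `S` no longer dominating. -/
noncomputable def SimpleGraph.critSet {V : Type*} [DecidableEq V] (G : SimpleGraph V)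
    (S : Finset V) : Finset V :=
  @Finset.filter _ (fun v => ¬ G.IsDomSet (S.erase v)) (Classical.decPred _) S

lemma domSet_mono {V : Type*} (G : SimpleGraph V) {S T : Finset V}
    (h : G.IsDomSet S) (hST : S ⊆ T) : G.IsDomSet T := fun v =>
  (h v).elim (fun hv => Or.inl (hST hv)) (fun ⟨u, hu, ha⟩ => Or.inr ⟨u, hST hu, ha⟩)

/-- For a graph `G` with `n` vertices,
`Σ_{S ∈ D(G)} |a(S)| = 2·Σ_{S ∈ D(G)} |S| − n·|D(G)|`. -/
theorem sum_critSet_card {V : Type*} [Fintype V] [DecidableEq V] (G : SimpleGraph V)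
    (n : ℕ) (hn : n = Fintype.card V) :
    (∑ S ∈ G.domSets, ((G.critSet S).card : ℝ)) =
      2 * (∑ S ∈ G.domSets, (S.card : ℝ)) - (n : ℝ) * (G.domSets).card := by
  classical
  have key : ∀ v : V,
      (G.domSets.filter (fun S => v ∈ S ∧ G.IsDomSet (S.erase v))).card
        = (G.domSets.filter (fun T => v ∉ T)).card := by
    intro v
    refine Finset.card_bij' (fun S _ => S.erase v) (fun T _ => insert v T) ?_ ?_ ?_ ?_
    · intro S hS
      simp only [Finset.mem_filter, SimpleGraph.domSets, Finset.mem_univ, true_and] at hS ⊢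
      exact ⟨hS.2.2, Finset.notMem_erase v S⟩
    · intro T hT
      simp only [Finset.mem_filter, SimpleGraph.domSets, Finset.mem_univ, true_and] at hT ⊢
      refine ⟨domSet_mono G hT.1 (Finset.subset_insert v T), Finset.mem_insert_self v T, ?_⟩
      rw [Finset.erase_insert hT.2]
      exact hT.1
    · intro S hS
      simp only [Finset.mem_filter] at hS
      exact Finset.insert_erase hS.2.1
    · intro T hT
      simp only [Finset.mem_filter] at hT
      exact Finset.erase_insert hT.2
  have hfilter : ∀ S : Finset V,
      (S.filter (fun v => G.IsDomSet (S.erase v))) =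
        (Finset.univ.filter (fun v => v ∈ S ∧ G.IsDomSet (S.erase v))) := by
    intro S; ext v; simp
  have hsum1 : (∑ S ∈ G.domSets, (G.critSet S).card)
      + ∑ S ∈ G.domSets, (S.filter (fun v => G.IsDomSet (S.erase v))).card
      = ∑ S ∈ G.domSets, S.card := by
    rw [← Finset.sum_add_distrib]
    refine Finset.sum_congr rfl fun S _ => ?_
    have h1 : G.critSet S = S.filter (fun v => ¬ G.IsDomSet (S.erase v)) := by
      unfold SimpleGraph.critSet
      exact Finset.filter_congr_decidable _ _ _
    rw [h1, add_comm]
    exact Finset.card_filter_add_card_filter_not _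
  have hmid : (∑ S ∈ G.domSets, (S.filter (fun v => G.IsDomSet (S.erase v))).card)
      = ∑ T ∈ G.domSets, (n - T.card) := by
    calc (∑ S ∈ G.domSets, (S.filter (fun v => G.IsDomSet (S.erase v))).card)
        = ∑ S ∈ G.domSets, ∑ v : V,
            (if v ∈ S ∧ G.IsDomSet (S.erase v) then 1 else 0) := by
          refine Finset.sum_congr rfl fun S _ => ?_
          rw [hfilter S, Finset.card_filter]
      _ = ∑ v : V, ∑ S ∈ G.domSets,
            (if v ∈ S ∧ G.IsDomSet (S.erase v) then 1 else 0) := Finset.sum_comm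
      _ = ∑ v : V, (G.domSets.filter (fun S => v ∈ S ∧ G.IsDomSet (S.erase v))).card := by
          refine Finset.sum_congr rfl fun v _ => ?_
          rw [Finset.card_filter]
      _ = ∑ v : V, (G.domSets.filter (fun T => v ∉ T)).card :=
          Finset.sum_congr rfl fun v _ => key v
      _ = ∑ v : V, ∑ T ∈ G.domSets, (if v ∉ T then 1 else 0) := by
          refine Finset.sum_congr rfl fun v _ => ?_
          rw [Finset.card_filter]
      _ = ∑ T ∈ G.domSets, ∑ v : V, (if v ∉ T then 1 else 0) := Finset.sum_comm
      _ = ∑ T ∈ G.domSets, (n - T.card) := by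
          refine Finset.sum_congr rfl fun T _ => ?_
          rw [← Finset.card_filter]
          have h2 : Finset.univ.filter (fun v => v ∉ T) = Tᶜ := by
            ext v; simp
          rw [h2, Finset.card_compl, hn]
  have hsub2 : (∑ T ∈ G.domSets, (n - T.card)) + ∑ T ∈ G.domSets, T.card
      = n * G.domSets.card := by
    rw [← Finset.sum_add_distrib]
    have : ∀ T ∈ G.domSets, n - T.card + T.card = n := by
      intro T _
      have : T.card ≤ n := by rw [hn]; exact Finset.card_le_univ T
      omega
    rw [Finset.sum_congr rfl this, Finset.sum_const, smul_eq_mul, mul_comm]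
  -- cast to ℝ and finish
  have e1 : ((∑ S ∈ G.domSets, (G.critSet S).card : ℕ) : ℝ)
      + ((∑ S ∈ G.domSets, (S.filter (fun v => G.IsDomSet (S.erase v))).card : ℕ) : ℝ)
      = ((∑ S ∈ G.domSets, S.card : ℕ) : ℝ) := by exact_mod_cast congrArg Nat.cast hsum1
  have e2 : ((∑ S ∈ G.domSets, (S.filter (fun v => G.IsDomSet (S.erase v))).card : ℕ) : ℝ)
      = ((∑ T ∈ G.domSets, (n - T.card) : ℕ) : ℝ) := by exact_mod_cast congrArg Nat.cast hmid
  have e3 : ((∑ T ∈ G.domSets, (n - T.card) : ℕ) : ℝ)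
      + ((∑ T ∈ G.domSets, T.card : ℕ) : ℝ)
      = (n : ℝ) * (G.domSets.card : ℝ) := by exact_mod_cast congrArg Nat.cast hsub2
  have goal' : ((∑ S ∈ G.domSets, (G.critSet S).card : ℕ) : ℝ)
      = 2 * ((∑ S ∈ G.domSets, S.card : ℕ) : ℝ) - (n : ℝ) * (G.domSets.card : ℝ) := by
    linarith
  push_cast at goal'
  exact goal'
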